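/- (Descent Lemma for Byz-DASHA-PAGE.) Let x^t, g_i^t, h_i^t (i ∈ 𝒢) and g^t be random vectors with x^{t+1} = x^t − γ g^t, γ > 0, and suppose g^t satisfies the robust-aggregation bound E‖g^t − ḡ^t‖² ≤ cδ·(1/(G(G−1))) Σ_{i,l∈𝒢, i≠l} E‖g_i^t − g_l^t‖², where ḡ^t = (1/G) Σ_{i∈𝒢} g_i^t and h^t = (1/G) Σ_{i∈𝒢} h_i^t. Then for every s > 0, with κ = 1 − 8Bcδ(1+s): E[f(x^{t+1})] ≤ E[f(x^t)] − (γκ/2)·E‖∇f(x^t)‖² − (1/(2γ) − L/2)·E‖x^{t+1} − x^t‖² + 8γcδ(1+s)·(1/G) Σ_{i∈𝒢} E‖g_i^t − h_i^t‖² + 8γcδ(1+s)·(1/G) Σ_{i∈𝒢} E‖h_i^t − ∇f_i(x^t)‖² + γ(1 + s^{−1})·E‖ḡ^t − h^t‖² + γ(1 + s^{−1})·E‖h^t − ∇f(x^t)‖² + 4γcδ(1+s)ζ². -/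

import Mathlib

open MeasureTheory Finset

section aux
variable {F : Type*} [NormedAddCommGroup F] [InnerProductSpace ℝ F]

lemma young_norm (a b : F) {s : ℝ} (hs : 0 < s) :
    ‖a + b‖ ^ 2 ≤ (1 + s) * ‖a‖ ^ 2 + (1 + s⁻¹) * ‖b‖ ^ 2 := by
  have h1 : ‖a + b‖ ≤ ‖a‖ + ‖b‖ := norm_add_le a b
  have h4 : ‖a + b‖ ^ 2 ≤ (‖a‖ + ‖b‖) ^ 2 := by
    have := norm_nonneg (a + b)
    nlinarith [norm_nonneg a, norm_nonneg b]
  have hexp : s⁻¹ * (s * ‖a‖ - ‖b‖) ^ 2 = s * ‖a‖ ^ 2 - 2 * ‖a‖ * ‖b‖ + s⁻¹ * ‖b‖ ^ 2 := by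
    field_simp
    ring
  have hkey : 0 ≤ s⁻¹ * (s * ‖a‖ - ‖b‖) ^ 2 :=
    mul_nonneg (inv_pos.2 hs).le (sq_nonneg _)
  nlinarith [norm_nonneg a, norm_nonneg b]

lemma norm_sub_sq_le_two (a b : F) : ‖a - b‖ ^ 2 ≤ 2 * ‖a‖ ^ 2 + 2 * ‖b‖ ^ 2 := by
  have h := young_norm a (-b) (s := 1) one_pos
  simp only [norm_neg, inv_one] at h
  rw [sub_eq_add_neg]
  linarith

lemma norm_add3_sq_le (u v w : F) :
    ‖u + v + w‖ ^ 2 ≤ 4 * ‖u‖ ^ 2 + 4 * ‖v‖ ^ 2 + 2 * ‖w‖ ^ 2 := by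
  have h1 := young_norm (u + v) w (s := 1) one_pos
  have h2 := young_norm u v (s := 1) one_pos
  simp only [inv_one] at h1 h2
  linarith

lemma pair_bound (gi gl hi hl pi pl P : F) :
    ‖gi - gl‖ ^ 2 ≤ 8 * ‖gi - hi‖ ^ 2 + 8 * ‖gl - hl‖ ^ 2 + 8 * ‖hi - pi‖ ^ 2
      + 8 * ‖hl - pl‖ ^ 2 + 4 * ‖pi - P‖ ^ 2 + 4 * ‖pl - P‖ ^ 2 := by
  have hdecomp : gi - gl = ((gi - hi) - (gl - hl)) + ((hi - pi) - (hl - pl))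
      + ((pi - P) - (pl - P)) := by abel
  have h1 := norm_add3_sq_le ((gi - hi) - (gl - hl)) ((hi - pi) - (hl - pl))
    ((pi - P) - (pl - P))
  have h2 := norm_sub_sq_le_two (gi - hi) (gl - hl)
  have h3 := norm_sub_sq_le_two (hi - pi) (hl - pl)
  have h4 := norm_sub_sq_le_two (pi - P) (pl - P)
  rw [hdecomp]
  linarith

end aux

lemma sum_offDiag_pair {ι : Type*} [Fintype ι] [DecidableEq ι] (ψ : ι → ℝ) :
    ∑ q ∈ (univ : Finset ι).offDiag, (ψ q.1 + ψ q.2)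
      = 2 * ((Fintype.card ι : ℝ) - 1) * ∑ i, ψ i := by
  have h1 : ∑ q ∈ ((univ : Finset ι) ×ˢ univ), (ψ q.1 + ψ q.2)
      = ∑ q ∈ (univ : Finset ι).diag, (ψ q.1 + ψ q.2)
        + ∑ q ∈ (univ : Finset ι).offDiag, (ψ q.1 + ψ q.2) := by
    rw [← Finset.sum_union (Finset.disjoint_diag_offDiag _), Finset.diag_union_offDiag]
  have h2 : ∑ q ∈ ((univ : Finset ι) ×ˢ univ), (ψ q.1 + ψ q.2)
      = 2 * (Fintype.card ι : ℝ) * ∑ i, ψ i := by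
    rw [Finset.sum_product]
    simp only [Finset.sum_add_distrib, Finset.sum_const, Finset.card_univ, nsmul_eq_mul,
      ← Finset.mul_sum, Finset.sum_comm]
    ring
  have h3 : ∑ q ∈ (univ : Finset ι).diag, (ψ q.1 + ψ q.2) = 2 * ∑ i, ψ i := by
    rw [Finset.sum_diag, Finset.sum_add_distrib]
    ring
  rw [h2, h3] at h1
  linarith

section descent
variable {F : Type*} [NormedAddCommGroup F] [InnerProductSpace ℝ F] [CompleteSpace F]

lemma descent_aux (f : F → ℝ) (hf : Differentiable ℝ f) {L : ℝ}
    (hlip : ∀ a b, ‖gradient f a - gradient f b‖ ≤ L * ‖a - b‖) (x y : F) :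
    f y ≤ f x + (inner ℝ (gradient f x) (y - x) : ℝ) + L / 2 * ‖y - x‖ ^ 2 := by
  set v := y - x with hv
  set φ : ℝ → ℝ := fun t => f (x + t • v) - t * (inner ℝ (gradient f x) v : ℝ)
    - L / 2 * t ^ 2 * ‖v‖ ^ 2 with hφ
  have hd : ∀ t : ℝ, HasDerivAt φ
      ((inner ℝ (gradient f (x + t • v)) v : ℝ) - (inner ℝ (gradient f x) v : ℝ)
        - L * t * ‖v‖ ^ 2) t := by
    intro t
    have hline : HasDerivAt (fun t : ℝ => x + t • v) v t := by
      simpa using ((hasDerivAt_id t).smul_const v).const_add x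
    have hcomp : HasDerivAt (fun t : ℝ => f (x + t • v))
        ((inner ℝ (gradient f (x + t • v)) v : ℝ)) t := by
      have hg := (hf (x + t • v)).hasGradientAt.hasFDerivAt
      have := hg.comp_hasDerivAt t hline
      rw [InnerProductSpace.toDual_apply_apply] at this
      exact this
    have h2 : HasDerivAt (fun t : ℝ => t * (inner ℝ (gradient f x) v : ℝ))
        ((inner ℝ (gradient f x) v : ℝ)) t := by
      simpa using (hasDerivAt_id t).mul_const ((inner ℝ (gradient f x) v : ℝ))
    have h3 : HasDerivAt (fun t : ℝ => L / 2 * t ^ 2 * ‖v‖ ^ 2)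
        (L * t * ‖v‖ ^ 2) t := by
      have := ((hasDerivAt_pow 2 t).const_mul (L / 2)).mul_const (‖v‖ ^ 2)
      have e : L * t * ‖v‖ ^ 2 = L / 2 * (((2 : ℕ) : ℝ) * t ^ (2 - 1)) * ‖v‖ ^ 2 := by
        rw [show (2:ℕ) - 1 = 1 from rfl]
        push_cast
        ring
      rw [e]
      exact this
    exact (hcomp.sub h2).sub h3
  have hanti : AntitoneOn φ (Set.Icc 0 1) := by
    apply antitoneOn_of_deriv_nonpos (convex_Icc 0 1)
    · exact Continuous.continuousOn
        (continuous_iff_continuousAt.2 fun t => (hd t).continuousAt)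
    · intro t _
      exact (hd t).differentiableAt.differentiableWithinAt
    · intro t ht
      rw [interior_Icc] at ht
      rw [(hd t).deriv]
      have hb : (inner ℝ (gradient f (x + t • v)) v : ℝ)
          - (inner ℝ (gradient f x) v : ℝ) ≤ L * t * ‖v‖ ^ 2 := by
        have h5 : (inner ℝ (gradient f (x + t • v)) v : ℝ)
            - (inner ℝ (gradient f x) v : ℝ)
            = (inner ℝ (gradient f (x + t • v) - gradient f x) v : ℝ) := by
          rw [inner_sub_left]
        rw [h5]
        calc (inner ℝ (gradient f (x + t • v) - gradient f x) v : ℝ)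
            ≤ ‖gradient f (x + t • v) - gradient f x‖ * ‖v‖ :=
              real_inner_le_norm _ _
          _ ≤ (L * ‖(x + t • v) - x‖) * ‖v‖ :=
              mul_le_mul_of_nonneg_right (hlip _ _) (norm_nonneg _)
          _ = L * t * ‖v‖ ^ 2 := by
              rw [add_sub_cancel_left, norm_smul, Real.norm_eq_abs, abs_of_pos ht.1]
              ring
      linarith
  have h01 : φ 1 ≤ φ 0 :=
    hanti (Set.left_mem_Icc.2 zero_le_one) (Set.right_mem_Icc.2 zero_le_one) zero_le_one
  have hφ0 : φ 0 = f x := by simp [hφ]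
  have hφ1 : φ 1 = f y - (inner ℝ (gradient f x) v : ℝ) - L / 2 * ‖v‖ ^ 2 := by
    simp [hφ, hv]
  rw [hφ0, hφ1] at h01
  linarith

end descent

set_option maxHeartbeats 1000000 in
/-- Descent Lemma for Byz-DASHA-PAGE. -/
theorem descent_lemma_byz_dasha_page
    {d : ℕ} {ι : Type*} [Fintype ι] [DecidableEq ι]
    (hG : 2 ≤ Fintype.card ι)
    -- local loss functions and their average
    (fS : ι → EuclideanSpace ℝ (Fin d) → ℝ)
    (f : EuclideanSpace ℝ (Fin d) → ℝ)
    (hf : ∀ x, f x = (1 / (Fintype.card ι : ℝ)) * ∑ i, fS i x)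
    (hdiff : ∀ i, Differentiable ℝ (fS i))
    -- L-smoothness of f
    (L : ℝ) (hL : 0 ≤ L)
    (hsmooth : ∀ x y, ‖gradient f x - gradient f y‖ ≤ L * ‖x - y‖)
    -- (B, ζ²)-heterogeneity
    (B ζ : ℝ) (hB : 0 ≤ B) (hζ : 0 ≤ ζ)
    (hhet : ∀ x, (1 / (Fintype.card ι : ℝ)) *
        ∑ i, ‖gradient (fS i) x - gradient f x‖ ^ 2
      ≤ B * ‖gradient f x‖ ^ 2 + ζ ^ 2)
    -- constants
    (c δ γ s : ℝ) (hc : 0 < c) (hδ0 : 0 ≤ δ) (hδ : δ < 1 / 2) (hγ : 0 < γ) (hs : 0 < s)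
    -- underlying probability space and random vectors
    {Ω : Type*} [MeasurableSpace Ω] (μ : Measure Ω) [IsProbabilityMeasure μ]
    (xt : Ω → EuclideanSpace ℝ (Fin d))
    (g : ι → Ω → EuclideanSpace ℝ (Fin d))
    (h : ι → Ω → EuclideanSpace ℝ (Fin d))
    (gt : Ω → EuclideanSpace ℝ (Fin d))
    (xt1 : Ω → EuclideanSpace ℝ (Fin d))
    (hstep : ∀ ω, xt1 ω = xt ω - γ • gt ω)
    -- robust aggregation bound
    (hagg : ∫ ω, ‖gt ω - (Fintype.card ι : ℝ)⁻¹ • ∑ i, g i ω‖ ^ 2 ∂μ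
      ≤ c * δ * ((1 / ((Fintype.card ι : ℝ) * ((Fintype.card ι : ℝ) - 1))) *
          ∑ q ∈ Finset.univ.offDiag, ∫ ω, ‖g q.1 ω - g q.2 ω‖ ^ 2 ∂μ))
    -- integrability of all relevant quantities
    (hint1 : Integrable (fun ω => f (xt1 ω)) μ)
    (hint2 : Integrable (fun ω => f (xt ω)) μ)
    (hint3 : Integrable (fun ω => ‖gradient f (xt ω)‖ ^ 2) μ)
    (hint4 : Integrable (fun ω => ‖xt1 ω - xt ω‖ ^ 2) μ)
    (hint5 : ∀ i, Integrable (fun ω => ‖g i ω - h i ω‖ ^ 2) μ)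
    (hint6 : ∀ i, Integrable (fun ω => ‖h i ω - gradient (fS i) (xt ω)‖ ^ 2) μ)
    (hint7 : Integrable
      (fun ω => ‖(Fintype.card ι : ℝ)⁻¹ • ∑ i, g i ω
        - (Fintype.card ι : ℝ)⁻¹ • ∑ i, h i ω‖ ^ 2) μ)
    (hint8 : Integrable
      (fun ω => ‖(Fintype.card ι : ℝ)⁻¹ • ∑ i, h i ω - gradient f (xt ω)‖ ^ 2) μ)
    (hint9 : ∀ i l : ι, Integrable (fun ω => ‖g i ω - g l ω‖ ^ 2) μ)
    (hint10 : Integrable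
      (fun ω => ‖gt ω - (Fintype.card ι : ℝ)⁻¹ • ∑ i, g i ω‖ ^ 2) μ) :
    ∫ ω, f (xt1 ω) ∂μ
      ≤ ∫ ω, f (xt ω) ∂μ
        - (γ * (1 - 8 * B * c * δ * (1 + s)) / 2) *
            ∫ ω, ‖gradient f (xt ω)‖ ^ 2 ∂μ
        - (1 / (2 * γ) - L / 2) * ∫ ω, ‖xt1 ω - xt ω‖ ^ 2 ∂μ
        + 8 * γ * c * δ * (1 + s) *
            ((1 / (Fintype.card ι : ℝ)) * ∑ i, ∫ ω, ‖g i ω - h i ω‖ ^ 2 ∂μ)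
        + 8 * γ * c * δ * (1 + s) *
            ((1 / (Fintype.card ι : ℝ)) *
              ∑ i, ∫ ω, ‖h i ω - gradient (fS i) (xt ω)‖ ^ 2 ∂μ)
        + γ * (1 + s⁻¹) *
            ∫ ω, ‖(Fintype.card ι : ℝ)⁻¹ • ∑ i, g i ω
              - (Fintype.card ι : ℝ)⁻¹ • ∑ i, h i ω‖ ^ 2 ∂μ
        + γ * (1 + s⁻¹) *
            ∫ ω, ‖(Fintype.card ι : ℝ)⁻¹ • ∑ i, h i ω - gradient f (xt ω)‖ ^ 2 ∂μ
        + 4 * γ * c * δ * (1 + s) * ζ ^ 2 := by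
  have hN2 : (2 : ℝ) ≤ (Fintype.card ι : ℝ) := by exact_mod_cast hG
  set N : ℝ := (Fintype.card ι : ℝ) with hNdef
  have hN0 : 0 < N := by linarith
  have hN1 : 0 < N - 1 := by linarith
  -- differentiability of f
  have hfd : Differentiable ℝ f := by
    have hfe : f = fun x => (1 / N) * ∑ i, fS i x := funext hf
    rw [hfe]
    exact (Differentiable.fun_sum fun i _ => hdiff i).const_mul _
  -- pointwise key inequality
  have key : ∀ ω, f (xt1 ω)
      ≤ f (xt ω) - γ / 2 * ‖gradient f (xt ω)‖ ^ 2
        - (1 / (2 * γ) - L / 2) * ‖xt1 ω - xt ω‖ ^ 2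
        + γ * (1 + s) / 2 * ‖gt ω - (N : ℝ)⁻¹ • ∑ i, g i ω‖ ^ 2
        + γ * (1 + s⁻¹) * ‖(N : ℝ)⁻¹ • ∑ i, g i ω - (N : ℝ)⁻¹ • ∑ i, h i ω‖ ^ 2
        + γ * (1 + s⁻¹) * ‖(N : ℝ)⁻¹ • ∑ i, h i ω - gradient f (xt ω)‖ ^ 2 := by
    intro ω
    have hdesc := descent_aux f hfd hsmooth (xt ω) (xt1 ω)
    set G0 := gradient f (xt ω) with hG0
    set gv := gt ω with hgv
    set gb := (N : ℝ)⁻¹ • ∑ i, g i ω with hgb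
    set hb := (N : ℝ)⁻¹ • ∑ i, h i ω with hhb
    have hΔ : xt1 ω - xt ω = -(γ • gv) := by rw [hstep ω]; abel
    have hinner : (inner ℝ G0 (xt1 ω - xt ω) : ℝ) = -(γ * (inner ℝ G0 gv : ℝ)) := by
      rw [hΔ, inner_neg_right, real_inner_smul_right]
    have hD : ‖xt1 ω - xt ω‖ ^ 2 = γ ^ 2 * ‖gv‖ ^ 2 := by
      rw [hΔ, norm_neg, norm_smul, Real.norm_eq_abs, abs_of_pos hγ, mul_pow]
    have hgi : -(γ * (inner ℝ G0 gv : ℝ))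
        = -(γ / 2) * (‖G0‖ ^ 2 + ‖gv‖ ^ 2 - ‖gv - G0‖ ^ 2) := by
      rw [norm_sub_sq_real, real_inner_comm gv G0]
      ring
    have hy1 : ‖gv - G0‖ ^ 2 ≤ (1 + s) * ‖gv - gb‖ ^ 2 + (1 + s⁻¹) * ‖gb - G0‖ ^ 2 := by
      have := young_norm (gv - gb) (gb - G0) hs
      rwa [sub_add_sub_cancel] at this
    have hy2 : ‖gb - G0‖ ^ 2 ≤ 2 * ‖gb - hb‖ ^ 2 + 2 * ‖hb - G0‖ ^ 2 := by
      have h2 := young_norm (gb - hb) (hb - G0) (s := 1) one_pos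
      rw [sub_add_sub_cancel] at h2
      simp only [inv_one] at h2
      linarith
    have hDb : (1 / (2 * γ)) * ‖xt1 ω - xt ω‖ ^ 2 = γ / 2 * ‖gv‖ ^ 2 := by
      rw [hD]
      field_simp
    have hsinv : 0 < s⁻¹ := inv_pos.2 hs
    have hge : γ / 2 * ‖gv - G0‖ ^ 2
        ≤ γ * (1 + s) / 2 * ‖gv - gb‖ ^ 2 + γ * (1 + s⁻¹) * ‖gb - hb‖ ^ 2
          + γ * (1 + s⁻¹) * ‖hb - G0‖ ^ 2 := by
      have e1 : γ / 2 * ‖gv - G0‖ ^ 2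
          ≤ γ / 2 * ((1 + s) * ‖gv - gb‖ ^ 2 + (1 + s⁻¹) * ‖gb - G0‖ ^ 2) := by
        apply mul_le_mul_of_nonneg_left hy1
        positivity
      have e2 : γ / 2 * ((1 + s⁻¹) * ‖gb - G0‖ ^ 2)
          ≤ γ / 2 * ((1 + s⁻¹) * (2 * ‖gb - hb‖ ^ 2 + 2 * ‖hb - G0‖ ^ 2)) := by
        apply mul_le_mul_of_nonneg_left _ (by positivity : (0:ℝ) ≤ γ / 2)
        apply mul_le_mul_of_nonneg_left hy2
        positivity
      nlinarith [e1, e2]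
    rw [hinner, hgi] at hdesc
    linarith [hdesc, hDb, hge]
  -- integrability of the majorant
  have hptA : Integrable (fun ω =>
      f (xt ω) - γ / 2 * ‖gradient f (xt ω)‖ ^ 2
        - (1 / (2 * γ) - L / 2) * ‖xt1 ω - xt ω‖ ^ 2
        + γ * (1 + s) / 2 * ‖gt ω - (N : ℝ)⁻¹ • ∑ i, g i ω‖ ^ 2
        + γ * (1 + s⁻¹) * ‖(N : ℝ)⁻¹ • ∑ i, g i ω - (N : ℝ)⁻¹ • ∑ i, h i ω‖ ^ 2
        + γ * (1 + s⁻¹) * ‖(N : ℝ)⁻¹ • ∑ i, h i ω - gradient f (xt ω)‖ ^ 2) μ :=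
    ((((hint2.sub (hint3.const_mul _)).sub (hint4.const_mul _)).add
      (hint10.const_mul _)).add (hint7.const_mul _)).add (hint8.const_mul _)
  have hmain := integral_mono hint1 hptA key
  have hI2 : Integrable (fun ω => γ / 2 * ‖gradient f (xt ω)‖ ^ 2) μ := by exact hint3.const_mul (γ / 2)
  have hI3 : Integrable (fun ω => (1 / (2 * γ) - L / 2) * ‖xt1 ω - xt ω‖ ^ 2) μ := by exact hint4.const_mul (1 / (2 * γ) - L / 2)
  have hI4 : Integrable (fun ω => γ * (1 + s) / 2 * ‖gt ω - (N : ℝ)⁻¹ • ∑ i, g i ω‖ ^ 2) μ := by exact hint10.const_mul (γ * (1 + s) / 2)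
  have hI5 : Integrable (fun ω => γ * (1 + s⁻¹) * ‖(N : ℝ)⁻¹ • ∑ i, g i ω - (N : ℝ)⁻¹ • ∑ i, h i ω‖ ^ 2) μ := by exact hint7.const_mul (γ * (1 + s⁻¹))
  have hI6 : Integrable (fun ω => γ * (1 + s⁻¹) * ‖(N : ℝ)⁻¹ • ∑ i, h i ω - gradient f (xt ω)‖ ^ 2) μ := by exact hint8.const_mul (γ * (1 + s⁻¹))
  have hI12 : Integrable (fun ω => f (xt ω) - γ / 2 * ‖gradient f (xt ω)‖ ^ 2) μ := by exact hint2.sub hI2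
  have hI123 : Integrable (fun ω => f (xt ω) - γ / 2 * ‖gradient f (xt ω)‖ ^ 2 - (1 / (2 * γ) - L / 2) * ‖xt1 ω - xt ω‖ ^ 2) μ := by exact hI12.sub hI3
  have hI1234 : Integrable (fun ω => f (xt ω) - γ / 2 * ‖gradient f (xt ω)‖ ^ 2 - (1 / (2 * γ) - L / 2) * ‖xt1 ω - xt ω‖ ^ 2 + γ * (1 + s) / 2 * ‖gt ω - (N : ℝ)⁻¹ • ∑ i, g i ω‖ ^ 2) μ := by exact hI123.add hI4
  have hI12345 : Integrable (fun ω => f (xt ω) - γ / 2 * ‖gradient f (xt ω)‖ ^ 2 - (1 / (2 * γ) - L / 2) * ‖xt1 ω - xt ω‖ ^ 2 + γ * (1 + s) / 2 * ‖gt ω - (N : ℝ)⁻¹ • ∑ i, g i ω‖ ^ 2 + γ * (1 + s⁻¹) * ‖(N : ℝ)⁻¹ • ∑ i, g i ω - (N : ℝ)⁻¹ • ∑ i, h i ω‖ ^ 2) μ := by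
    exact hI1234.add hI5
  have E1 : ∫ ω, (f (xt ω) - γ / 2 * ‖gradient f (xt ω)‖ ^ 2 - (1 / (2 * γ) - L / 2) * ‖xt1 ω - xt ω‖ ^ 2 + γ * (1 + s) / 2 * ‖gt ω - (N : ℝ)⁻¹ • ∑ i, g i ω‖ ^ 2 + γ * (1 + s⁻¹) * ‖(N : ℝ)⁻¹ • ∑ i, g i ω - (N : ℝ)⁻¹ • ∑ i, h i ω‖ ^ 2 + γ * (1 + s⁻¹) * ‖(N : ℝ)⁻¹ • ∑ i, h i ω - gradient f (xt ω)‖ ^ 2) ∂μ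
      = ∫ ω, (f (xt ω) - γ / 2 * ‖gradient f (xt ω)‖ ^ 2 - (1 / (2 * γ) - L / 2) * ‖xt1 ω - xt ω‖ ^ 2 + γ * (1 + s) / 2 * ‖gt ω - (N : ℝ)⁻¹ • ∑ i, g i ω‖ ^ 2 + γ * (1 + s⁻¹) * ‖(N : ℝ)⁻¹ • ∑ i, g i ω - (N : ℝ)⁻¹ • ∑ i, h i ω‖ ^ 2) ∂μ + ∫ ω, (γ * (1 + s⁻¹) * ‖(N : ℝ)⁻¹ • ∑ i, h i ω - gradient f (xt ω)‖ ^ 2) ∂μ := integral_add hI12345 hI6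
  have E2 : ∫ ω, (f (xt ω) - γ / 2 * ‖gradient f (xt ω)‖ ^ 2 - (1 / (2 * γ) - L / 2) * ‖xt1 ω - xt ω‖ ^ 2 + γ * (1 + s) / 2 * ‖gt ω - (N : ℝ)⁻¹ • ∑ i, g i ω‖ ^ 2 + γ * (1 + s⁻¹) * ‖(N : ℝ)⁻¹ • ∑ i, g i ω - (N : ℝ)⁻¹ • ∑ i, h i ω‖ ^ 2) ∂μ
      = ∫ ω, (f (xt ω) - γ / 2 * ‖gradient f (xt ω)‖ ^ 2 - (1 / (2 * γ) - L / 2) * ‖xt1 ω - xt ω‖ ^ 2 + γ * (1 + s) / 2 * ‖gt ω - (N : ℝ)⁻¹ • ∑ i, g i ω‖ ^ 2) ∂μ + ∫ ω, (γ * (1 + s⁻¹) * ‖(N : ℝ)⁻¹ • ∑ i, g i ω - (N : ℝ)⁻¹ • ∑ i, h i ω‖ ^ 2) ∂μ := integral_add hI1234 hI5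
  have E3 : ∫ ω, (f (xt ω) - γ / 2 * ‖gradient f (xt ω)‖ ^ 2 - (1 / (2 * γ) - L / 2) * ‖xt1 ω - xt ω‖ ^ 2 + γ * (1 + s) / 2 * ‖gt ω - (N : ℝ)⁻¹ • ∑ i, g i ω‖ ^ 2) ∂μ
      = ∫ ω, (f (xt ω) - γ / 2 * ‖gradient f (xt ω)‖ ^ 2 - (1 / (2 * γ) - L / 2) * ‖xt1 ω - xt ω‖ ^ 2) ∂μ + ∫ ω, (γ * (1 + s) / 2 * ‖gt ω - (N : ℝ)⁻¹ • ∑ i, g i ω‖ ^ 2) ∂μ := integral_add hI123 hI4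
  have E4 : ∫ ω, (f (xt ω) - γ / 2 * ‖gradient f (xt ω)‖ ^ 2 - (1 / (2 * γ) - L / 2) * ‖xt1 ω - xt ω‖ ^ 2) ∂μ
      = ∫ ω, (f (xt ω) - γ / 2 * ‖gradient f (xt ω)‖ ^ 2) ∂μ - ∫ ω, ((1 / (2 * γ) - L / 2) * ‖xt1 ω - xt ω‖ ^ 2) ∂μ := integral_sub hI12 hI3
  have E5 : ∫ ω, (f (xt ω) - γ / 2 * ‖gradient f (xt ω)‖ ^ 2) ∂μ = ∫ ω, (f (xt ω)) ∂μ - ∫ ω, (γ / 2 * ‖gradient f (xt ω)‖ ^ 2) ∂μ := integral_sub hint2 hI2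
  have M2 : ∫ ω, (γ / 2 * ‖gradient f (xt ω)‖ ^ 2) ∂μ = γ / 2 * ∫ ω, ‖gradient f (xt ω)‖ ^ 2 ∂μ := integral_const_mul _ _
  have M3 : ∫ ω, ((1 / (2 * γ) - L / 2) * ‖xt1 ω - xt ω‖ ^ 2) ∂μ = (1 / (2 * γ) - L / 2) * ∫ ω, ‖xt1 ω - xt ω‖ ^ 2 ∂μ :=
    integral_const_mul _ _
  have M4 : ∫ ω, (γ * (1 + s) / 2 * ‖gt ω - (N : ℝ)⁻¹ • ∑ i, g i ω‖ ^ 2) ∂μ = γ * (1 + s) / 2 *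
      ∫ ω, ‖gt ω - (N : ℝ)⁻¹ • ∑ i, g i ω‖ ^ 2 ∂μ := integral_const_mul _ _
  have M5 : ∫ ω, (γ * (1 + s⁻¹) * ‖(N : ℝ)⁻¹ • ∑ i, g i ω - (N : ℝ)⁻¹ • ∑ i, h i ω‖ ^ 2) ∂μ = γ * (1 + s⁻¹) *
      ∫ ω, ‖(N : ℝ)⁻¹ • ∑ i, g i ω - (N : ℝ)⁻¹ • ∑ i, h i ω‖ ^ 2 ∂μ := integral_const_mul _ _
  have M6 : ∫ ω, (γ * (1 + s⁻¹) * ‖(N : ℝ)⁻¹ • ∑ i, h i ω - gradient f (xt ω)‖ ^ 2) ∂μ = γ * (1 + s⁻¹) *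
      ∫ ω, ‖(N : ℝ)⁻¹ • ∑ i, h i ω - gradient f (xt ω)‖ ^ 2 ∂μ := integral_const_mul _ _
  rw [E1, E2, E3, E4, E5, M2, M3, M4, M5, M6] at hmain
  -- bound the aggregation term
  have hhet' : ∀ ω, ∑ i, ‖gradient (fS i) (xt ω) - gradient f (xt ω)‖ ^ 2
      ≤ N * (B * ‖gradient f (xt ω)‖ ^ 2 + ζ ^ 2) := by
    intro ω
    have hh := hhet (xt ω)
    have hmul := mul_le_mul_of_nonneg_left hh hN0.le
    have e : N * (1 / N * ∑ i, ‖gradient (fS i) (xt ω) - gradient f (xt ω)‖ ^ 2)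
        = ∑ i, ‖gradient (fS i) (xt ω) - gradient f (xt ω)‖ ^ 2 := by
      field_simp
    linarith
  have hTU : ∀ ω, ∑ q ∈ (univ : Finset ι).offDiag, ‖g q.1 ω - g q.2 ω‖ ^ 2
      ≤ 16 * (N - 1) * ∑ i, ‖g i ω - h i ω‖ ^ 2
        + 16 * (N - 1) * ∑ i, ‖h i ω - gradient (fS i) (xt ω)‖ ^ 2
        + 8 * (N - 1) * N * (B * ‖gradient f (xt ω)‖ ^ 2 + ζ ^ 2) := by
    intro ω
    set ψ : ι → ℝ := fun i => 8 * ‖g i ω - h i ω‖ ^ 2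
      + 8 * ‖h i ω - gradient (fS i) (xt ω)‖ ^ 2
      + 4 * ‖gradient (fS i) (xt ω) - gradient f (xt ω)‖ ^ 2 with hψ
    have hstep1 : ∑ q ∈ (univ : Finset ι).offDiag, ‖g q.1 ω - g q.2 ω‖ ^ 2
        ≤ ∑ q ∈ (univ : Finset ι).offDiag, (ψ q.1 + ψ q.2) := by
      apply Finset.sum_le_sum
      intro q _
      have := pair_bound (g q.1 ω) (g q.2 ω) (h q.1 ω) (h q.2 ω)
        (gradient (fS q.1) (xt ω)) (gradient (fS q.2) (xt ω)) (gradient f (xt ω))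
      simp only [hψ]
      linarith
    have hstep2 : ∑ q ∈ (univ : Finset ι).offDiag, (ψ q.1 + ψ q.2)
        = 2 * (N - 1) * ∑ i, ψ i := sum_offDiag_pair ψ
    have hsplit : ∑ i, ψ i = 8 * ∑ i, ‖g i ω - h i ω‖ ^ 2
        + 8 * ∑ i, ‖h i ω - gradient (fS i) (xt ω)‖ ^ 2
        + 4 * ∑ i, ‖gradient (fS i) (xt ω) - gradient f (xt ω)‖ ^ 2 := by
      simp only [hψ, Finset.sum_add_distrib, ← Finset.mul_sum]
    have hh := hhet' ω
    nlinarith [hstep1, hstep2, hsplit, hh, hN1]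
  have hUint : Integrable (fun ω =>
      16 * (N - 1) * ∑ i, ‖g i ω - h i ω‖ ^ 2
        + 16 * (N - 1) * ∑ i, ‖h i ω - gradient (fS i) (xt ω)‖ ^ 2
        + 8 * (N - 1) * N * (B * ‖gradient f (xt ω)‖ ^ 2 + ζ ^ 2)) μ := by
    refine Integrable.add (Integrable.add ?_ ?_) ?_
    · exact (integrable_finset_sum _ fun i _ => hint5 i).const_mul _
    · exact (integrable_finset_sum _ fun i _ => hint6 i).const_mul _
    · exact ((hint3.const_mul B).add (integrable_const _)).const_mul _
  have hSU : ∑ q ∈ (univ : Finset ι).offDiag, ∫ ω, ‖g q.1 ω - g q.2 ω‖ ^ 2 ∂μ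
      ≤ 16 * (N - 1) * ∑ i, ∫ ω, ‖g i ω - h i ω‖ ^ 2 ∂μ
        + 16 * (N - 1) * ∑ i, ∫ ω, ‖h i ω - gradient (fS i) (xt ω)‖ ^ 2 ∂μ
        + 8 * (N - 1) * N * (B * (∫ ω, ‖gradient f (xt ω)‖ ^ 2 ∂μ) + ζ ^ 2) := by
    rw [← integral_finset_sum _ fun q _ => hint9 q.1 q.2]
    calc ∫ ω, ∑ q ∈ (univ : Finset ι).offDiag, ‖g q.1 ω - g q.2 ω‖ ^ 2 ∂μ
        ≤ ∫ ω, (16 * (N - 1) * ∑ i, ‖g i ω - h i ω‖ ^ 2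
          + 16 * (N - 1) * ∑ i, ‖h i ω - gradient (fS i) (xt ω)‖ ^ 2
          + 8 * (N - 1) * N * (B * ‖gradient f (xt ω)‖ ^ 2 + ζ ^ 2)) ∂μ :=
          integral_mono (integrable_finset_sum _ fun q _ => hint9 q.1 q.2) hUint hTU
      _ = 16 * (N - 1) * ∑ i, ∫ ω, ‖g i ω - h i ω‖ ^ 2 ∂μ
          + 16 * (N - 1) * ∑ i, ∫ ω, ‖h i ω - gradient (fS i) (xt ω)‖ ^ 2 ∂μ
          + 8 * (N - 1) * N * (B * (∫ ω, ‖gradient f (xt ω)‖ ^ 2 ∂μ) + ζ ^ 2) := by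
          have hJ1 : Integrable (fun ω => 16 * (N - 1) * ∑ i, ‖g i ω - h i ω‖ ^ 2) μ := by
            exact (integrable_finset_sum _ fun i _ => hint5 i).const_mul (16 * (N - 1))
          have hJ2 : Integrable (fun ω => 16 * (N - 1) * ∑ i, ‖h i ω - gradient (fS i) (xt ω)‖ ^ 2) μ := by
            exact (integrable_finset_sum _ fun i _ => hint6 i).const_mul (16 * (N - 1))
          have hJ3 : Integrable (fun ω => 8 * (N - 1) * N * (B * ‖gradient f (xt ω)‖ ^ 2 + ζ ^ 2)) μ := by
            exact ((hint3.const_mul B).add (integrable_const (ζ ^ 2))).const_mul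
              (8 * (N - 1) * N)
          have hJ12 : Integrable (fun ω => 16 * (N - 1) * ∑ i, ‖g i ω - h i ω‖ ^ 2 + 16 * (N - 1) * ∑ i, ‖h i ω - gradient (fS i) (xt ω)‖ ^ 2) μ := by exact hJ1.add hJ2
          have F1 : ∫ ω, (16 * (N - 1) * ∑ i, ‖g i ω - h i ω‖ ^ 2 + 16 * (N - 1) * ∑ i, ‖h i ω - gradient (fS i) (xt ω)‖ ^ 2 + 8 * (N - 1) * N * (B * ‖gradient f (xt ω)‖ ^ 2 + ζ ^ 2)) ∂μ
              = ∫ ω, (16 * (N - 1) * ∑ i, ‖g i ω - h i ω‖ ^ 2 + 16 * (N - 1) * ∑ i, ‖h i ω - gradient (fS i) (xt ω)‖ ^ 2) ∂μ + ∫ ω, (8 * (N - 1) * N * (B * ‖gradient f (xt ω)‖ ^ 2 + ζ ^ 2)) ∂μ := integral_add hJ12 hJ3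
          have F2 : ∫ ω, (16 * (N - 1) * ∑ i, ‖g i ω - h i ω‖ ^ 2 + 16 * (N - 1) * ∑ i, ‖h i ω - gradient (fS i) (xt ω)‖ ^ 2) ∂μ = ∫ ω, (16 * (N - 1) * ∑ i, ‖g i ω - h i ω‖ ^ 2) ∂μ + ∫ ω, (16 * (N - 1) * ∑ i, ‖h i ω - gradient (fS i) (xt ω)‖ ^ 2) ∂μ := integral_add hJ1 hJ2
          have G1 : ∫ ω, (16 * (N - 1) * ∑ i, ‖g i ω - h i ω‖ ^ 2) ∂μ = 16 * (N - 1) * ∫ ω, ∑ i, ‖g i ω - h i ω‖ ^ 2 ∂μ :=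
            integral_const_mul _ _
          have G2 : ∫ ω, (16 * (N - 1) * ∑ i, ‖h i ω - gradient (fS i) (xt ω)‖ ^ 2) ∂μ
              = 16 * (N - 1) * ∫ ω, ∑ i, ‖h i ω - gradient (fS i) (xt ω)‖ ^ 2 ∂μ :=
            integral_const_mul _ _
          have G3 : ∫ ω, (8 * (N - 1) * N * (B * ‖gradient f (xt ω)‖ ^ 2 + ζ ^ 2)) ∂μ
              = 8 * (N - 1) * N * ∫ ω, (B * ‖gradient f (xt ω)‖ ^ 2 + ζ ^ 2) ∂μ :=
            integral_const_mul _ _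
          have F3 : ∫ ω, (B * ‖gradient f (xt ω)‖ ^ 2 + ζ ^ 2) ∂μ
              = (∫ ω, B * ‖gradient f (xt ω)‖ ^ 2 ∂μ) + ∫ (_ : Ω), ζ ^ 2 ∂μ :=
            integral_add (by exact hint3.const_mul B) (integrable_const (ζ ^ 2))
          have G4 : ∫ ω, B * ‖gradient f (xt ω)‖ ^ 2 ∂μ
              = B * ∫ ω, ‖gradient f (xt ω)‖ ^ 2 ∂μ := integral_const_mul _ _
          have C1 : ∫ (_ : Ω), ζ ^ 2 ∂μ = ζ ^ 2 := by simp
          rw [F1, F2, G1, G2, G3, F3, G4, C1,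
            integral_finset_sum _ fun i _ => hint5 i,
            integral_finset_sum _ fun i _ => hint6 i]
  -- combine aggregation bound
  have hI3W : ∫ ω, ‖gt ω - (N : ℝ)⁻¹ • ∑ i, g i ω‖ ^ 2 ∂μ
      ≤ c * δ * (16 / N * ∑ i, ∫ ω, ‖g i ω - h i ω‖ ^ 2 ∂μ
        + 16 / N * ∑ i, ∫ ω, ‖h i ω - gradient (fS i) (xt ω)‖ ^ 2 ∂μ
        + 8 * B * (∫ ω, ‖gradient f (xt ω)‖ ^ 2 ∂μ) + 8 * ζ ^ 2) := by
    have hcδ : 0 ≤ c * δ := mul_nonneg hc.le hδ0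
    have hfrac : 0 ≤ 1 / (N * (N - 1)) := by positivity
    have harith : (1 / (N * (N - 1))) *
        (16 * (N - 1) * ∑ i, ∫ ω, ‖g i ω - h i ω‖ ^ 2 ∂μ
          + 16 * (N - 1) * ∑ i, ∫ ω, ‖h i ω - gradient (fS i) (xt ω)‖ ^ 2 ∂μ
          + 8 * (N - 1) * N * (B * (∫ ω, ‖gradient f (xt ω)‖ ^ 2 ∂μ) + ζ ^ 2))
        = 16 / N * ∑ i, ∫ ω, ‖g i ω - h i ω‖ ^ 2 ∂μ
          + 16 / N * ∑ i, ∫ ω, ‖h i ω - gradient (fS i) (xt ω)‖ ^ 2 ∂μ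
          + 8 * B * (∫ ω, ‖gradient f (xt ω)‖ ^ 2 ∂μ) + 8 * ζ ^ 2 := by
      field_simp
      ring
    calc ∫ ω, ‖gt ω - (N : ℝ)⁻¹ • ∑ i, g i ω‖ ^ 2 ∂μ
        ≤ c * δ * ((1 / (N * (N - 1))) *
            ∑ q ∈ Finset.univ.offDiag, ∫ ω, ‖g q.1 ω - g q.2 ω‖ ^ 2 ∂μ) := hagg
      _ ≤ c * δ * ((1 / (N * (N - 1))) *
            (16 * (N - 1) * ∑ i, ∫ ω, ‖g i ω - h i ω‖ ^ 2 ∂μ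
              + 16 * (N - 1) * ∑ i, ∫ ω, ‖h i ω - gradient (fS i) (xt ω)‖ ^ 2 ∂μ
              + 8 * (N - 1) * N * (B * (∫ ω, ‖gradient f (xt ω)‖ ^ 2 ∂μ) + ζ ^ 2))) := by
          apply mul_le_mul_of_nonneg_left _ hcδ
          exact mul_le_mul_of_nonneg_left hSU hfrac
      _ = c * δ * (16 / N * ∑ i, ∫ ω, ‖g i ω - h i ω‖ ^ 2 ∂μ
            + 16 / N * ∑ i, ∫ ω, ‖h i ω - gradient (fS i) (xt ω)‖ ^ 2 ∂μ
            + 8 * B * (∫ ω, ‖gradient f (xt ω)‖ ^ 2 ∂μ) + 8 * ζ ^ 2) := by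
          rw [harith]
  have hfin : γ * (1 + s) / 2 * ∫ ω, ‖gt ω - (N : ℝ)⁻¹ • ∑ i, g i ω‖ ^ 2 ∂μ
      ≤ γ * (1 + s) / 2 * (c * δ * (16 / N * ∑ i, ∫ ω, ‖g i ω - h i ω‖ ^ 2 ∂μ
        + 16 / N * ∑ i, ∫ ω, ‖h i ω - gradient (fS i) (xt ω)‖ ^ 2 ∂μ
        + 8 * B * (∫ ω, ‖gradient f (xt ω)‖ ^ 2 ∂μ) + 8 * ζ ^ 2)) := by
    apply mul_le_mul_of_nonneg_left hI3W
    positivity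
  have hring : γ * (1 + s) / 2 * (c * δ * (16 / N * ∑ i, ∫ ω, ‖g i ω - h i ω‖ ^ 2 ∂μ
        + 16 / N * ∑ i, ∫ ω, ‖h i ω - gradient (fS i) (xt ω)‖ ^ 2 ∂μ
        + 8 * B * (∫ ω, ‖gradient f (xt ω)‖ ^ 2 ∂μ) + 8 * ζ ^ 2))
      = 8 * γ * c * δ * (1 + s) * (1 / N * ∑ i, ∫ ω, ‖g i ω - h i ω‖ ^ 2 ∂μ)
        + 8 * γ * c * δ * (1 + s) *
            (1 / N * ∑ i, ∫ ω, ‖h i ω - gradient (fS i) (xt ω)‖ ^ 2 ∂μ)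
        + (γ / 2 - γ * (1 - 8 * B * c * δ * (1 + s)) / 2) *
            (∫ ω, ‖gradient f (xt ω)‖ ^ 2 ∂μ)
        + 4 * γ * c * δ * (1 + s) * ζ ^ 2 := by ring
  rw [hring] at hfin
  linarith [hmain, hfin]
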